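/- Consider the planar ODE system u' = 2u² − 2u − 2uv, v' = 4uv with initial conditions u(0) = 1, v(0) = v₀ > 0. Then along any solution with v(t) > 0, the quantity u(t) − 1 − (v(t)·v₀)^{1/2} + v(t) is identically zero, i.e., u(t) = 1 + (v(t)v₀)^{1/2} − v(t). -/

import Mathlib

theorem first_integral_H3 (T v₀ : ℝ) (u v : ℝ → ℝ) (hv₀ : 0 < v₀)
    (hu0 : u 0 = 1) (hv0 : v 0 = v₀)
    (hvpos : ∀ t ∈ Set.Ico (0:ℝ) T, 0 < v t)
    (hu : ∀ t ∈ Set.Ico (0:ℝ) T,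
      HasDerivAt u (2 * (u t) ^ 2 - 2 * u t - 2 * u t * v t) t)
    (hv : ∀ t ∈ Set.Ico (0:ℝ) T, HasDerivAt v (4 * u t * v t) t) :
    ∀ t ∈ Set.Ico (0:ℝ) T, u t = 1 + Real.sqrt (v t * v₀) - v t := by
  intro t ht
  obtain ⟨ht0, htT⟩ := ht
  have hsub : Set.Icc (0:ℝ) t ⊆ Set.Ico 0 T := fun s hs => ⟨hs.1, lt_of_le_of_lt hs.2 htT⟩
  set f : ℝ → ℝ := fun s => (u s - 1 + v s) ^ 2 / v s with hf
  have hderiv : ∀ s ∈ Set.Ico (0:ℝ) t, HasDerivWithinAt f 0 (Set.Ici s) s := by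
    intro s hs
    have hsmem : s ∈ Set.Ico (0:ℝ) T := ⟨hs.1, hs.2.trans htT⟩
    have hus := hu s hsmem
    have hvs := hv s hsmem
    have hvp := hvpos s hsmem
    have hw : HasDerivAt (fun s => (u s - 1 + v s) ^ 2)
        (2 * (u s - 1 + v s) ^ 1 *
          ((2 * (u s) ^ 2 - 2 * u s - 2 * u s * v s) + 4 * u s * v s)) s := by
      have h1 : HasDerivAt (fun s => u s - 1 + v s)
          ((2 * (u s) ^ 2 - 2 * u s - 2 * u s * v s) + 4 * u s * v s) s :=
        (hus.sub_const 1).add hvs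
      simpa using h1.fun_pow 2
    have h2 := hw.fun_div hvs (ne_of_gt hvp)
    have h3 : HasDerivAt f 0 s := by
      refine h2.congr_deriv ?_
      rw [div_eq_iff (pow_ne_zero 2 (ne_of_gt hvp))]
      ring
    exact h3.hasDerivWithinAt
  have hcont : ContinuousOn f (Set.Icc 0 t) := by
    intro s hs
    have hsmem := hsub hs
    exact ((((hu s hsmem).continuousAt.sub continuousAt_const).add
      (hv s hsmem).continuousAt).pow 2).continuousWithinAt.div
      (hv s hsmem).continuousAt.continuousWithinAt (ne_of_gt (hvpos s hsmem))
  have hconst : ∀ s ∈ Set.Icc (0:ℝ) t, f s = f 0 :=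
    constant_of_has_deriv_right_zero hcont hderiv
  have hf0 : f 0 = v₀ := by
    simp only [hf, hu0, hv0]
    field_simp
    ring
  have hkey : ∀ s ∈ Set.Icc (0:ℝ) t, (u s - 1 + v s) ^ 2 = v s * v₀ := by
    intro s hs
    have h := hconst s hs
    rw [hf0] at h
    have hvp := hvpos s (hsub hs)
    rw [div_eq_iff (ne_of_gt hvp)] at h
    linarith [h]
  have hne : ∀ s ∈ Set.Icc (0:ℝ) t, u s - 1 + v s ≠ 0 := by
    intro s hs h0
    have h := hkey s hs
    rw [h0] at h
    have hvp := hvpos s (hsub hs)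
    nlinarith
  have hwcont : ContinuousOn (fun s => u s - 1 + v s) (Set.Icc 0 t) := by
    intro s hs
    have hsmem := hsub hs
    exact (((hu s hsmem).continuousAt.sub continuousAt_const).add
      (hv s hsmem).continuousAt).continuousWithinAt
  have hw0 : u 0 - 1 + v 0 = v₀ := by rw [hu0, hv0]; ring
  have hwt : 0 < u t - 1 + v t := by
    by_contra hle
    push_neg at hle
    have hne' := hne t ⟨ht0, le_refl t⟩
    have hlt : u t - 1 + v t < 0 := lt_of_le_of_ne hle hne'
    have : (0:ℝ) ∈ Set.Icc (u t - 1 + v t) (u 0 - 1 + v 0) := by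
      constructor <;> [linarith; (rw [hw0]; linarith)]
    have := intermediate_value_Icc' ht0 hwcont this
    obtain ⟨s, hs, hs0⟩ := this
    exact hne s hs hs0
  have hkt := hkey t ⟨ht0, le_refl t⟩
  have : Real.sqrt (v t * v₀) = u t - 1 + v t := by
    rw [← hkt, Real.sqrt_sq (le_of_lt hwt)]
  linarith [this]
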